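/- Suppose the difference of aggregated features h_a − h_b of any pair (v_a, v_b) with v_a ∈ V₁ʸ, v_b ∈ V₀ʸ is distributed as N(u(μ₁ − μ₀)·1, (σ₁² + σ₀²) I_ζ). Then for any δ ∈ (0,1), with probability at least 1 − δ (ignoring the mean-centered cross term, i.e., under the approximation ‖h_a − h_b‖₂² ≈ ‖h_a − h_b − u(μ₁−μ₀)·1‖₂² + ζu²(μ₁−μ₀)²), the aggregated feature distance η_y = ‖h_a − h_b‖₂ for the extremal pair satisfies (σ₁² + σ₀²)ζ(1 − 2√(log(2/δ)/ζ)) + ζu²(μ₁ − μ₀)² ≤ η_y² ≤ (σ₁² + σ₀²)ζ(1 + 4√(log(2/δ)/ζ)) + ζu²(μ₁ − μ₀)², for ζ large enough. -/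

import Mathlib

open MeasureTheory ProbabilityTheory Real NNReal ENNReal

lemma aux_log_one_add_ge {x : ℝ} (hx : 0 ≤ x) : x - x^2/2 ≤ Real.log (1+x) := by
  set f : ℝ → ℝ := fun x => Real.log (1+x) - x + x^2/2 with hf
  have hd : ∀ y ∈ Set.Ioi (0:ℝ), HasDerivAt f (y^2/(1+y)) y := by
    intro y hy
    have hy0 : (0:ℝ) < y := hy
    have h1 : HasDerivAt (fun z : ℝ => 1 + z) 1 y := (hasDerivAt_id y).const_add 1
    have hlog : HasDerivAt (fun z : ℝ => Real.log (1+z)) (1/(1+y)) y :=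
      h1.log (by positivity)
    have h2 : HasDerivAt (fun z : ℝ => z^2/2) ((2*y^1)/2) y :=
      (hasDerivAt_pow 2 y).div_const 2
    have := (hlog.sub (hasDerivAt_id y)).add h2
    have h1y : (1:ℝ) + y ≠ 0 := by positivity
    rw [show y^2/(1+y) = 1/(1+y) - 1 + 2*y^1/2 by field_simp; ring]
    exact this
  have hmono : MonotoneOn f (Set.Ici 0) := by
    apply monotoneOn_of_deriv_nonneg (convex_Ici 0)
    · apply ContinuousOn.add
      apply ContinuousOn.sub
      · exact ((continuous_const.add continuous_id).continuousOn).log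
          (fun z hz => by simp only [Set.mem_Ici] at hz; simp only [Pi.add_apply, id]; positivity)
      · exact continuous_id.continuousOn
      · exact (continuous_pow 2).continuousOn.div_const 2
    · intro y hy
      rw [interior_Ici] at hy
      exact (hd y hy).differentiableAt.differentiableWithinAt
    · intro y hy
      rw [interior_Ici] at hy
      rw [(hd y hy).deriv]
      have : (0:ℝ) < y := hy
      positivity
  have h0 : f 0 = 0 := by simp [hf]
  have := hmono (Set.self_mem_Ici) (Set.mem_Ici.mpr hx) hx
  rw [h0] at this
  simp only [hf] at this
  linarith

lemma aux_neg_log_one_sub_le {y : ℝ} (hy0 : 0 ≤ y) (hy1 : y < 1) :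
    -Real.log (1-y) ≤ y + y^2/(2*(1-y)) := by
  set g : ℝ → ℝ := fun y => y + y^2/(2*(1-y)) + Real.log (1-y) with hg
  have hd : ∀ z ∈ Set.Ioo (0:ℝ) 1, HasDerivAt g (z^2/(2*(1-z)^2)) z := by
    intro z hz
    obtain ⟨hz0, hz1⟩ := hz
    have hne : (1:ℝ) - z ≠ 0 := by linarith
    have hne2 : (2:ℝ)*(1-z) ≠ 0 := by intro h; apply hne; linarith
    have h1 : HasDerivAt (fun w : ℝ => 2*(1-w)) (2*(-1)) z :=
      ((hasDerivAt_id z).const_sub 1).const_mul 2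
    have h2 : HasDerivAt (fun w : ℝ => w^2/(2*(1-w)))
        ((2*z^1 * (2*(1-z)) - z^2 * (2*(-1)))/(2*(1-z))^2) z :=
      (hasDerivAt_pow 2 z).div h1 hne2
    have h3 : HasDerivAt (fun w : ℝ => Real.log (1-w)) ((-1)/(1-z)) z :=
      ((hasDerivAt_id z).const_sub 1).log hne
    have := ((hasDerivAt_id z).add h2).add h3
    rw [show z^2/(2*(1-z)^2) = 1 + (2*z^1*(2*(1-z)) - z^2*(2*(-1)))/(2*(1-z))^2 + (-1)/(1-z) by
      field_simp; ring]
    exact this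
  have hmono : MonotoneOn g (Set.Ico 0 1) := by
    apply monotoneOn_of_deriv_nonneg (convex_Ico 0 1)
    · apply ContinuousOn.add
      apply ContinuousOn.add
      · exact continuous_id.continuousOn
      · exact (continuous_pow 2).continuousOn.div
          ((continuous_const.mul (continuous_const.sub continuous_id)).continuousOn)
          (fun z hz => by
            simp only [Set.mem_Ico] at hz
            have : (1:ℝ) - z > 0 := by linarith [hz.2]
            positivity)
      · exact ((continuous_const.sub continuous_id).continuousOn).log
          (fun z hz => by
            simp only [Set.mem_Ico] at hz
            have : (1:ℝ) - z > 0 := by linarith [hz.2]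
            positivity)
    · intro z hz
      rw [interior_Ico] at hz
      exact (hd z hz).differentiableAt.differentiableWithinAt
    · intro z hz
      rw [interior_Ico] at hz
      rw [(hd z hz).deriv]
      have h1 : (0:ℝ) < z := hz.1
      have h2 : (0:ℝ) < 1 - z := by linarith [hz.2]
      positivity
  have h0 : g 0 = 0 := by simp [hg]
  have := hmono (Set.left_mem_Ico.mpr one_pos) (Set.mem_Ico.mpr ⟨hy0, hy1⟩) hy0
  rw [h0] at this
  simp only [hg] at this
  linarith

lemma aux_gaussian_sq_exp {v : ℝ≥0} (hv : v ≠ 0) {t : ℝ} (ht : 2 * t * v < 1) :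
    Integrable (fun z => rexp (t * z^2)) (gaussianReal 0 v) ∧
    ∫ z, rexp (t * z^2) ∂(gaussianReal 0 v) = (Real.sqrt (1 - 2*t*v))⁻¹ := by
  have hV : (0:ℝ) < v := by positivity
  have h2v : (0:ℝ) < 2*v := by positivity
  set b : ℝ := (2*(v:ℝ))⁻¹ - t with hb
  have hb0 : 0 < b := by
    have h1 : t < 1/(2*(v:ℝ)) := (lt_div_iff₀ h2v).mpr (by linarith)
    rw [hb, sub_pos, ← one_div]
    exact h1
  have hbv : 2*(v:ℝ)*b = 1 - 2*t*v := by
    rw [hb]; field_simp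
  have hpdf : ∀ z : ℝ, gaussianPDFReal 0 v z * rexp (t * z^2)
      = (Real.sqrt (2*π*v))⁻¹ * rexp (-b * z^2) := by
    intro z
    rw [gaussianPDFReal, mul_assoc, ← Real.exp_add]
    congr 2
    rw [hb]; field_simp; ring
  rw [gaussianReal_of_var_ne_zero 0 hv]
  have hdens : gaussianPDF 0 v
      = fun z => (((gaussianPDFReal 0 v z).toNNReal : ℝ≥0) : ENNReal) := rfl
  rw [hdens]
  have hmeasf : Measurable fun z => (gaussianPDFReal 0 v z).toNNReal :=
    (measurable_gaussianPDFReal 0 v).real_toNNReal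
  have hfun : (fun z => ((gaussianPDFReal 0 v z).toNNReal : ℝ≥0) • rexp (t * z^2))
      = fun z => (Real.sqrt (2*π*v))⁻¹ * rexp (-b * z^2) := by
    funext z
    rw [NNReal.smul_def, smul_eq_mul, Real.coe_toNNReal _ (gaussianPDFReal_nonneg 0 v z), hpdf z]
  constructor
  · rw [integrable_withDensity_iff_integrable_smul hmeasf, hfun]
    exact (integrable_exp_neg_mul_sq hb0).const_mul _
  · rw [integral_withDensity_eq_integral_smul hmeasf, hfun, integral_const_mul, integral_gaussian]
    rw [← hbv]
    have hsπ : Real.sqrt π ≠ 0 := by positivity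
    have hsb : Real.sqrt b ≠ 0 := by positivity
    have hs2v : Real.sqrt (2*(v:ℝ)) ≠ 0 := by positivity
    rw [show (2:ℝ)*v*b = (2*v)*b by ring, Real.sqrt_mul h2v.le b,
      show 2*π*(v:ℝ) = (2*v)*π by ring, Real.sqrt_mul h2v.le π,
      Real.sqrt_div Real.pi_pos.le]
    field_simp

lemma aux_rv_sq_exp {Ω : Type*} [MeasureSpace Ω] {X : Ω → ℝ} {m : ℝ} {v : ℝ≥0}
    (hX : Measurable X) (hlaw : Measure.map X ℙ = gaussianReal m v) (hv : v ≠ 0)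
    {t : ℝ} (ht : 2 * t * v < 1) :
    Integrable (fun ω => rexp (t * (X ω - m)^2)) ℙ ∧
    ∫ ω, rexp (t * (X ω - m)^2) ∂ℙ = (Real.sqrt (1 - 2*t*v))⁻¹ := by
  have hmap : Measure.map (fun ω => X ω - m) ℙ = gaussianReal 0 v := by
    have hcomp : (fun ω => X ω - m) = (· + (-m)) ∘ X := by
      funext ω; simp [sub_eq_add_neg]
    rw [hcomp, ← Measure.map_map (measurable_id'.add_const (-m)) hX, hlaw,
      gaussianReal_map_add_const (-m)]
    simp
  have hXm : AEMeasurable (fun ω => X ω - m) ℙ := (hX.sub_const m).aemeasurable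
  have hg : Measurable fun z : ℝ => rexp (t * z^2) :=
    (measurable_const.mul ((measurable_id.pow_const 2))).exp
  obtain ⟨hint, hval⟩ := aux_gaussian_sq_exp hv ht
  constructor
  · rw [← hmap] at hint
    exact (integrable_map_measure hg.aestronglyMeasurable hXm).mp hint
  · rw [← hmap, integral_map hXm hg.aestronglyMeasurable] at hval
    exact hval

lemma aux_chisq_mgf {Ω : Type*} [MeasureSpace Ω] [IsProbabilityMeasure (ℙ : Measure Ω)]
    {ζ : ℕ} {m : ℝ} {v : ℝ≥0} (hv : v ≠ 0) {d : Fin ζ → Ω → ℝ}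
    (hindep : iIndepFun d ℙ)
    (hmeas : ∀ i, Measurable (d i))
    (hlaw : ∀ i, Measure.map (d i) ℙ = gaussianReal m v)
    {t : ℝ} (ht : 2 * t * v < 1) :
    Integrable (fun ω => rexp (t * (∑ i, (d i ω - m)^2))) ℙ ∧
    mgf (fun ω => ∑ i, (d i ω - m)^2) ℙ t
      = rexp ((ζ:ℝ) * -(Real.log (1 - 2*t*v) / 2)) := by
  have hA : (0:ℝ) < 1 - 2*t*v := by linarith
  set Y : Fin ζ → Ω → ℝ := fun i ω => (d i ω - m)^2 with hY
  have hYindep : iIndepFun Y ℙ :=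
    hindep.comp (fun _ x => (x - m)^2)
      (fun _ => (measurable_id.sub_const m).pow_const 2)
  have hYmeas : ∀ i, Measurable (Y i) := fun i => ((hmeas i).sub_const m).pow_const 2
  have hSeq : (fun ω => ∑ i, (d i ω - m)^2) = ∑ i, Y i := by
    funext ω
    rw [Finset.sum_apply]
  have hcoord : ∀ i, mgf (Y i) ℙ t = rexp (-(Real.log (1 - 2*t*v) / 2)) := by
    intro i
    have := (aux_rv_sq_exp (hmeas i) (hlaw i) hv ht).2
    rw [mgf, this, ← Real.exp_log (Real.sqrt_pos.mpr hA), Real.log_sqrt hA.le, ← Real.exp_neg]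
  have hint : ∀ i, Integrable (fun ω => rexp (t * Y i ω)) ℙ :=
    fun i => (aux_rv_sq_exp (hmeas i) (hlaw i) hv ht).1
  constructor
  · have := hYindep.integrable_exp_mul_sum hYmeas (s := Finset.univ) (fun i _ => hint i)
    have h2 : (fun ω => rexp (t * ∑ i, (d i ω - m)^2))
        = fun ω => rexp (t * (∑ i, Y i) ω) := by
      funext ω
      rw [Finset.sum_apply]
    rw [h2]
    exact this
  · rw [hSeq, hYindep.mgf_sum hYmeas Finset.univ]
    rw [Finset.prod_congr rfl (fun i _ => hcoord i), Finset.prod_const, Finset.card_univ,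
      Fintype.card_fin, ← Real.exp_nat_mul]

lemma aux_up {n r w : ℝ} (hn : 0 ≤ n) (hr : 0 < r) (hhalf : r ≤ 1/2)
    (hw : w = r/(1+2*r)) :
    -(w*n*(1+4*r)) - n * Real.log (1-2*w) / 2 ≤ -(n*r^2) := by
  have h1 : (0:ℝ) < 1+2*r := by linarith
  have hw0 : 0 ≤ 2*w := by rw [hw]; positivity
  have hw1 : 2*w < 1 := by
    rw [hw, mul_div_assoc']
    rw [div_lt_one h1]
    linarith
  have hlog := aux_neg_log_one_sub_le hw0 hw1
  have hA : 1-2*w = 1/(1+2*r) := by rw [hw]; field_simp; ring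
  have hkey : (2*w)^2/(2*(1-2*w)) = 2*w*r := by
    rw [hA, hw]
    field_simp
  rw [hkey] at hlog
  have h2 : n/2 * (-Real.log (1-2*w)) ≤ n/2 * (2*w + 2*w*r) :=
    mul_le_mul_of_nonneg_left hlog (by linarith)
  have hwge : r/2 ≤ w := by
    rw [hw]
    apply div_le_div_of_nonneg_left hr.le h1  -- might be wrong name/order
    linarith
  nlinarith [mul_le_mul_of_nonneg_left hwge (mul_nonneg (mul_nonneg (by norm_num : (0:ℝ) ≤ 3) hn) hr.le)]

lemma aux_low {n r : ℝ} (hn : 0 ≤ n) (hr : 0 ≤ r) :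
    r*n*(1-2*r) - n * Real.log (1+2*r) / 2 ≤ -(n*r^2) := by
  have hlog := aux_log_one_add_ge (x := 2*r) (by linarith)
  nlinarith [mul_le_mul_of_nonneg_left hlog (by linarith : (0:ℝ) ≤ n/2)]

/-- Theorem 3.5 of the paper: two-sided bound on the (approximated) squared aggregated
feature distance `η_y²` between sensitive groups, where the coordinates of `h_a − h_b`
are i.i.d. `N(u(μ₁ − μ₀), σ₁² + σ₀²)` and, following the paper's approximation,
`η_y² ≈ ‖h_a − h_b − u(μ₁−μ₀)·1‖₂² + ζ u² (μ₁−μ₀)²`. -/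
theorem aggregated_feature_distance_bound
    {Ω : Type*} [MeasureSpace Ω] [IsProbabilityMeasure (ℙ : Measure Ω)]
    {ζ : ℕ} (u μ₁ μ₀ σ₁ σ₀ : ℝ) (v : ℝ≥0) (hv : (v : ℝ) = σ₁^2 + σ₀^2)
    (d : Fin ζ → Ω → ℝ)
    (hindep : iIndepFun d ℙ)
    (hmeas : ∀ i, Measurable (d i))
    (hlaw : ∀ i, Measure.map (d i) ℙ = gaussianReal (u * (μ₁ - μ₀)) v)
    (δ : ℝ) (hδ : δ ∈ Set.Ioo (0:ℝ) 1)
    (hζ : 4 * Real.log (2/δ) ≤ (ζ : ℝ)) :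
    ENNReal.ofReal (1 - δ) ≤
      ℙ {ω |
        (σ₁^2 + σ₀^2) * ζ * (1 - 2 * Real.sqrt (Real.log (2/δ) / ζ))
            + ζ * u^2 * (μ₁ - μ₀)^2
          ≤ (∑ i, (d i ω - u * (μ₁ - μ₀))^2) + ζ * u^2 * (μ₁ - μ₀)^2
        ∧ (∑ i, (d i ω - u * (μ₁ - μ₀))^2) + ζ * u^2 * (μ₁ - μ₀)^2
          ≤ (σ₁^2 + σ₀^2) * ζ * (1 + 4 * Real.sqrt (Real.log (2/δ) / ζ))
              + ζ * u^2 * (μ₁ - μ₀)^2} := by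
  obtain ⟨hδ0, hδ1⟩ := hδ
  set m := u * (μ₁ - μ₀) with hm
  set L := Real.log (2/δ) with hLdef
  have hL0 : 0 < L := Real.log_pos (by rw [lt_div_iff₀ hδ0]; linarith)
  set S : Ω → ℝ := fun ω => ∑ i, (d i ω - m)^2 with hSdef
  have hSmeas : Measurable S :=
    Finset.measurable_sum Finset.univ (fun i _ => ((hmeas i).sub_const m).pow_const 2)
  set lo := (σ₁^2+σ₀^2) * (ζ:ℝ) * (1 - 2*Real.sqrt (L/(ζ:ℝ))) with hlo
  set hi := (σ₁^2+σ₀^2) * (ζ:ℝ) * (1 + 4*Real.sqrt (L/(ζ:ℝ))) with hhi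
  have hEvent : {ω |
        (σ₁^2 + σ₀^2) * (ζ:ℝ) * (1 - 2 * Real.sqrt (L / (ζ:ℝ)))
            + (ζ:ℝ) * u^2 * (μ₁ - μ₀)^2
          ≤ (∑ i, (d i ω - m)^2) + (ζ:ℝ) * u^2 * (μ₁ - μ₀)^2
        ∧ (∑ i, (d i ω - m)^2) + (ζ:ℝ) * u^2 * (μ₁ - μ₀)^2
          ≤ (σ₁^2 + σ₀^2) * (ζ:ℝ) * (1 + 4 * Real.sqrt (L / (ζ:ℝ)))
              + (ζ:ℝ) * u^2 * (μ₁ - μ₀)^2}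
      = {ω | lo ≤ S ω ∧ S ω ≤ hi} := by
    ext ω
    simp only [Set.mem_setOf_eq, hSdef, hlo, hhi]
    constructor
    · rintro ⟨h1, h2⟩
      exact ⟨by linarith, by linarith⟩
    · rintro ⟨h1, h2⟩
      exact ⟨by linarith, by linarith⟩
  rw [hEvent]
  have hEmeas : MeasurableSet {ω | lo ≤ S ω ∧ S ω ≤ hi} := by
    rw [Set.setOf_and]
    exact (measurableSet_le measurable_const hSmeas).inter
      (measurableSet_le hSmeas measurable_const)
  by_cases hv0 : v = 0
  · -- degenerate case
    have hVzero : σ₁^2 + σ₀^2 = 0 := by rw [← hv, hv0]; simp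
    have hae : ∀ i : Fin ζ, ∀ᵐ ω ∂ℙ, d i ω = m := by
      intro i
      have hmap : ℙ (d i ⁻¹' {m}) = 1 := by
        rw [← Measure.map_apply (hmeas i) (measurableSet_singleton m), hlaw i, hv0,
          gaussianReal_zero_var, Measure.dirac_apply_of_mem (Set.mem_singleton m)]
      have hcompl : ℙ (d i ⁻¹' {m})ᶜ = 0 :=
        (prob_compl_eq_zero_iff ((hmeas i) (measurableSet_singleton m))).mpr hmap
      rw [ae_iff]
      convert hcompl using 2; rfl
    have haeall : ∀ᵐ ω ∂ℙ, ∀ i, d i ω = m := ae_all_iff.mpr hae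
    have haeE : ∀ᵐ ω ∂ℙ, ω ∈ {ω | lo ≤ S ω ∧ S ω ≤ hi} := by
      filter_upwards [haeall] with ω hω
      have hSω : S ω = 0 := by
        simp only [hSdef]
        apply Finset.sum_eq_zero
        intro i _
        rw [hω i]
        ring
      constructor
      · simp only [hlo, hVzero, hSω]
        norm_num
      · simp only [hhi, hVzero, hSω]
        norm_num
    have hone : ℙ {ω | lo ≤ S ω ∧ S ω ≤ hi} = 1 := by
      rw [← prob_compl_eq_zero_iff hEmeas]
      rw [ae_iff] at haeE
      convert haeE using 2; rfl
    rw [hone]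
    exact ENNReal.ofReal_le_one.mpr (by linarith)
  · -- main case
    have hVpos : (0:ℝ) < v := by
      have := pos_iff_ne_zero.mpr hv0
      exact_mod_cast this
    have hn0 : (0:ℝ) < ζ := by linarith
    set r := Real.sqrt (L/(ζ:ℝ)) with hrdef
    have hr2 : r^2 = L/(ζ:ℝ) := Real.sq_sqrt (by positivity)
    have hrpos : 0 < r := Real.sqrt_pos.mpr (by positivity)
    have hrhalf : r ≤ 1/2 := by
      rw [hrdef, show (1:ℝ)/2 = Real.sqrt (1/4) by
        rw [show (1:ℝ)/4 = (1/2)^2 by norm_num, Real.sqrt_sq (by norm_num)]]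
      apply Real.sqrt_le_sqrt
      rw [div_le_div_iff₀ hn0 (by norm_num)]
      linarith
    have hnrL : (ζ:ℝ) * r^2 = L := by
      rw [hr2]
      field_simp
    have hVeq : σ₁^2 + σ₀^2 = (v:ℝ) := hv.symm
    have hlogd : Real.log (δ/2) = -L := by
      rw [hLdef, show δ/2 = (2/δ)⁻¹ by rw [inv_div], Real.log_inv]
    have h1r : (0:ℝ) < 1+2*r := by linarith
    -- upper tail
    have hup : (ℙ {ω | hi ≤ S ω}).toReal ≤ δ/2 := by
      set t := r/((1+2*r)*(v:ℝ)) with htdef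
      have ht0 : 0 ≤ t := by positivity
      have htv : t * (v:ℝ) = r/(1+2*r) := by
        rw [htdef]
        field_simp
      have htlt : 2*t*(v:ℝ) < 1 := by
        rw [mul_assoc, htv, mul_div_assoc', div_lt_one h1r]
        linarith
      obtain ⟨hint, hmgf⟩ := aux_chisq_mgf hv0 hindep hmeas hlaw htlt
      have hch := measure_ge_le_exp_mul_mgf (X := S) (μ := ℙ) hi ht0 hint
      rw [hmgf] at hch
      have hexp : rexp (-t * hi) * rexp ((ζ:ℝ) * -(Real.log (1 - 2*t*(v:ℝ)) / 2)) ≤ δ/2 := by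
        rw [← Real.exp_add, show δ/2 = rexp (Real.log (δ/2)) from
          (Real.exp_log (by linarith)).symm, hlogd]
        apply Real.exp_le_exp.mpr
        have hthi : t * hi = (t*(v:ℝ)) * (ζ:ℝ) * (1+4*r) := by
          rw [hhi, hVeq]
          ring
        have h2tv : 2*t*(v:ℝ) = 2*(t*(v:ℝ)) := by ring
        have := aux_up (n := (ζ:ℝ)) (r := r) (w := t*(v:ℝ)) hn0.le hrpos hrhalf htv
        rw [hnrL] at this
        calc -t * hi + (ζ:ℝ) * -(Real.log (1 - 2*t*(v:ℝ)) / 2)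
            = -((t*(v:ℝ))*(ζ:ℝ)*(1+4*r)) - (ζ:ℝ) * Real.log (1-2*(t*(v:ℝ))) / 2 := by
              rw [← h2tv]
              rw [show -t * hi = -(t * hi) by ring, hthi]
              ring
          _ ≤ -L := this
      calc (ℙ {ω | hi ≤ S ω}).toReal
          ≤ rexp (-t * hi) * rexp ((ζ:ℝ) * -(Real.log (1 - 2*t*(v:ℝ)) / 2)) := hch
        _ ≤ δ/2 := hexp
    -- lower tail
    have hlow : (ℙ {ω | S ω ≤ lo}).toReal ≤ δ/2 := by
      set t := -(r/(v:ℝ)) with htdef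
      have ht0 : t ≤ 0 := by
        rw [htdef]
        simp only [neg_nonpos]
        positivity
      have htv : t * (v:ℝ) = -r := by
        rw [htdef]
        field_simp
      have htlt : 2*t*(v:ℝ) < 1 := by
        rw [mul_assoc, htv]
        linarith
      obtain ⟨hint, hmgf⟩ := aux_chisq_mgf hv0 hindep hmeas hlaw htlt
      have hch := measure_le_le_exp_mul_mgf (X := S) (μ := ℙ) lo ht0 hint
      rw [hmgf] at hch
      have hexp : rexp (-t * lo) * rexp ((ζ:ℝ) * -(Real.log (1 - 2*t*(v:ℝ)) / 2)) ≤ δ/2 := by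
        rw [← Real.exp_add, show δ/2 = rexp (Real.log (δ/2)) from
          (Real.exp_log (by linarith)).symm, hlogd]
        apply Real.exp_le_exp.mpr
        have htlo : -t * lo = r * (ζ:ℝ) * (1-2*r) := by
          rw [hlo, hVeq, htdef]
          field_simp
        have h2tv : 1 - 2*t*(v:ℝ) = 1 + 2*r := by
          rw [mul_assoc, htv]
          ring
        have := aux_low (n := (ζ:ℝ)) (r := r) hn0.le hrpos.le
        rw [hnrL] at this
        calc -t * lo + (ζ:ℝ) * -(Real.log (1 - 2*t*(v:ℝ)) / 2)
            = r*(ζ:ℝ)*(1-2*r) - (ζ:ℝ) * Real.log (1+2*r) / 2 := by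
              rw [htlo, h2tv]
              ring
          _ ≤ -L := this
      calc (ℙ {ω | S ω ≤ lo}).toReal
          ≤ rexp (-t * lo) * rexp ((ζ:ℝ) * -(Real.log (1 - 2*t*(v:ℝ)) / 2)) := hch
        _ ≤ δ/2 := hexp
    -- union bound
    have hcompl : ℙ {ω | lo ≤ S ω ∧ S ω ≤ hi}ᶜ ≤ ENNReal.ofReal δ := by
      have hsub : {ω | lo ≤ S ω ∧ S ω ≤ hi}ᶜ ⊆ {ω | S ω ≤ lo} ∪ {ω | hi ≤ S ω} := by
        intro ω hω
        simp only [Set.mem_compl_iff, Set.mem_setOf_eq, not_and_or, not_le] at hω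
        rcases hω with h | h
        · exact Or.inl h.le
        · exact Or.inr h.le
      calc ℙ {ω | lo ≤ S ω ∧ S ω ≤ hi}ᶜ
          ≤ ℙ ({ω | S ω ≤ lo} ∪ {ω | hi ≤ S ω}) := measure_mono hsub
        _ ≤ ℙ {ω | S ω ≤ lo} + ℙ {ω | hi ≤ S ω} := measure_union_le _ _
        _ ≤ ENNReal.ofReal (δ/2) + ENNReal.ofReal (δ/2) := by
            apply add_le_add
            · exact (ENNReal.le_ofReal_iff_toReal_le (measure_ne_top _ _) (by linarith)).mpr hlow
            · exact (ENNReal.le_ofReal_iff_toReal_le (measure_ne_top _ _) (by linarith)).mpr hup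
        _ = ENNReal.ofReal δ := by
            rw [← ENNReal.ofReal_add (by linarith) (by linarith)]
            norm_num
    rw [prob_compl_eq_one_sub hEmeas] at hcompl
    have hfin : ENNReal.ofReal (1-δ) = 1 - ENNReal.ofReal δ := by
      rw [← ENNReal.ofReal_one, ← ENNReal.ofReal_sub _ hδ0.le]
    rw [hfin]
    exact tsub_le_iff_left.mpr (tsub_le_iff_right.mp hcompl)
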